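/- arXiv:2303.09532 — 4 statements merged into one kernel-verified Lean document; each statement's English description precedes it below -/
import Mathlib

section
/- Let f : ℝⁿ → ℝ be C¹, strictly convex with unique global minimizer ȳ, and μ-strongly convex (μ > 0) with respect to a C², strictly convex, Legendre-type potential φ : ℝⁿ → ℝ with conjugate φ*. Let (x(t), y(t)) be the state and output trajectories of the mirror descent dynamics ẋ(t) = −∇f(∇φ*(x(t))), y(t) = ∇φ*(x(t)), with x(0) = x₀ and y₀ = ∇φ*(x₀). Then for every t ≥ 0, D_φ(ȳ, y(t)) ≤ D_φ(ȳ, y₀) e^{−μt}. -/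
open scoped RealInnerProductSpace
open Filter MeasureTheory

/-- Legendre–Fenchel conjugate: `ψ*(v) = sup_x { ⟨v, x⟩ − ψ(x) }`. -/
noncomputable def fenchel {n : ℕ} (ψ : EuclideanSpace ℝ (Fin n) → ℝ)
    (v : EuclideanSpace ℝ (Fin n)) : ℝ :=
  ⨆ z : EuclideanSpace ℝ (Fin n), (⟪v, z⟫ - ψ z)

/-- Bregman divergence: `D_ψ(y, y') = ψ(y) − ψ(y') − ⟨∇ψ(y'), y − y'⟩`. -/
noncomputable def bregman {n : ℕ} (ψ : EuclideanSpace ℝ (Fin n) → ℝ)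
    (y y' : EuclideanSpace ℝ (Fin n)) : ℝ :=
  ψ y - ψ y' - ⟪gradient ψ y', y - y'⟫

/-- `φ` is of Legendre type: `|∇φ(x)| → ∞` as `|x| → ∞`. -/
def LegendreType {n : ℕ} (φ : EuclideanSpace ℝ (Fin n) → ℝ) : Prop :=
  Tendsto (fun z => ‖gradient φ z‖) (cocompact (EuclideanSpace ℝ (Fin n))) atTop

section Aux
open Set Topology

variable {n : ℕ}
local notation "E" => EuclideanSpace ℝ (Fin n)

lemma hasDerivAt_comp_line {g : E → ℝ} {G : E → E} (hg : ∀ z, HasGradientAt g (G z) z)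
    (a b : E) (t : ℝ) :
    HasDerivAt (fun s : ℝ => g (AffineMap.lineMap a b s))
      ⟪G (AffineMap.lineMap a b t), b - a⟫ t := by
  have h1 : HasDerivAt (fun s : ℝ => (AffineMap.lineMap a b : ℝ →ᵃ[ℝ] E) s) (b - a) t :=
    AffineMap.hasDerivAt_lineMap
  have h2 := hasGradientAt_iff_hasFDerivAt.mp (hg (AffineMap.lineMap a b t))
  have h3 := h2.comp_hasDerivAt t h1
  simpa [InnerProductSpace.toDual_apply_apply, Function.comp_def] using h3

lemma tangent_le {g : E → ℝ} {G : E → E} (hg : ∀ z, HasGradientAt g (G z) z)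
    (hc : ConvexOn ℝ Set.univ g) (a b : E) : g a + ⟪G a, b - a⟫ ≤ g b := by
  have hψ : ConvexOn ℝ Set.univ (g ∘ (AffineMap.lineMap a b : ℝ →ᵃ[ℝ] E)) := by
    simpa using hc.comp_affineMap (AffineMap.lineMap a b : ℝ →ᵃ[ℝ] E)
  have hd := hasDerivAt_comp_line hg a b 0
  rw [AffineMap.lineMap_apply_zero] at hd
  have hs := hψ.le_slope_of_hasDerivAt (Set.mem_univ (0:ℝ)) (Set.mem_univ (1:ℝ)) one_pos hd
  rw [slope_def_field] at hs
  simp only [Function.comp, AffineMap.lineMap_apply_zero, AffineMap.lineMap_apply_one] at hs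
  linarith

lemma tangent_lt {g : E → ℝ} {G : E → E} (hg : ∀ z, HasGradientAt g (G z) z)
    (hc : StrictConvexOn ℝ Set.univ g) {a b : E} (hab : a ≠ b) :
    g a + ⟪G a, b - a⟫ < g b := by
  have hm := hc.2 (Set.mem_univ a) (Set.mem_univ b) hab (by norm_num : (0:ℝ) < 1/2)
    (by norm_num : (0:ℝ) < 1/2) (by norm_num)
  have ht := tangent_le hg hc.convexOn a ((1/2 : ℝ) • a + (1/2 : ℝ) • b)
  have hmid : ((1/2 : ℝ) • a + (1/2 : ℝ) • b) - a = (1/2 : ℝ) • (b - a) := by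
    module
  rw [hmid, real_inner_smul_right] at ht
  simp only [smul_eq_mul] at hm
  linarith

lemma grad_injective {g : E → ℝ} {G : E → E} (hg : ∀ z, HasGradientAt g (G z) z)
    (hc : StrictConvexOn ℝ Set.univ g) : Function.Injective G := by
  intro a b hab
  by_contra hne
  have h1 := tangent_lt hg hc hne
  have h2 := tangent_lt hg hc (Ne.symm hne)
  rw [hab] at h1
  have : ⟪G b, a - b⟫ = -⟪G b, b - a⟫ := by
    rw [show a - b = -(b - a) by abel, inner_neg_right]
  linarith
/-- variational inequality at a minimizer over a convex set -/
lemma varineq {g : E → ℝ} {G : E → E} (hg : ∀ z, HasGradientAt g (G z) z)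
    {s : Set E} (hconv : Convex ℝ s) {z : E} (hz : z ∈ s)
    (hmin : ∀ w ∈ s, g z ≤ g w) {w : E} (hw : w ∈ s) :
    0 ≤ ⟪G z, w - z⟫ := by
  have hd := hasDerivAt_comp_line hg z w 0
  rw [AffineMap.lineMap_apply_zero] at hd
  have ht : Tendsto (slope (fun s : ℝ => g (AffineMap.lineMap z w s)) 0) (𝓝[>] 0)
      (𝓝 ⟪G z, w - z⟫) :=
    (hasDerivAt_iff_tendsto_slope.mp hd).mono_left
      (nhdsWithin_mono _ (fun x hx => ne_of_gt hx))
  refine ge_of_tendsto ht ?_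
  filter_upwards [Ioo_mem_nhdsGT_of_mem (by simp : (0:ℝ) ∈ Ico (0:ℝ) 1)] with t ht'
  rw [slope_def_field]
  have hmem : AffineMap.lineMap z w t ∈ s := by
    rw [AffineMap.lineMap_apply_module]
    exact hconv hz hw (by linarith [ht'.2]) (le_of_lt ht'.1) (by ring)
  have h1 := hmin _ hmem
  rw [AffineMap.lineMap_apply_zero]
  apply div_nonneg (by linarith) (by linarith [ht'.1])

lemma grad_surjective {g : E → ℝ} {G : E → E} (hg : ∀ z, HasGradientAt g (G z) z)
    (hc : ConvexOn ℝ Set.univ g)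
    (hleg : Tendsto (fun z => ‖G z‖) (cocompact (EuclideanSpace ℝ (Fin n))) atTop) :
    Function.Surjective G := by
  intro v
  by_contra hns
  push_neg at hns
  set g' : E → ℝ := fun z => g z - ⟪v, z⟫ with hg'def
  set G' : E → E := fun z => G z - v with hG'def
  have hgrad' : ∀ z, HasGradientAt g' (G' z) z := by
    intro z
    rw [hasGradientAt_iff_hasFDerivAt]
    have h1 := hasGradientAt_iff_hasFDerivAt.mp (hg z)
    have h2 : HasFDerivAt (fun z : E => ⟪v, z⟫)
        (InnerProductSpace.toDual ℝ (EuclideanSpace ℝ (Fin n)) v) z :=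
      (InnerProductSpace.toDual ℝ (EuclideanSpace ℝ (Fin n)) v).hasFDerivAt
    have := h1.sub h2
    rw [show G' z = G z - v from rfl, map_sub]
    exact this
  have hc' : ConvexOn ℝ Set.univ g' := by
    refine ⟨convex_univ, ?_⟩
    intro p _ q _ a b ha hb hab
    have h2 := hc.2 (Set.mem_univ p) (Set.mem_univ q) ha hb hab
    simp only [smul_eq_mul] at h2
    simp only [g', smul_eq_mul, inner_add_right, real_inner_smul_right]
    linarith
  have hG'ne : ∀ z, G' z ≠ 0 := by
    intro z hz0
    exact hns z (by rw [← sub_eq_zero]; exact hz0)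
  have hkey : ∀ k : ℕ, 1 ≤ k → ∃ z : E, ‖z‖ = (k : ℝ) ∧ ‖G' z‖ ≤ ‖G' 0‖ := by
    intro k hk
    have hkpos : (0:ℝ) < (k:ℝ) := by exact_mod_cast hk
    have hcomp : IsCompact (Metric.closedBall (0:E) k) := isCompact_closedBall _ _
    have hcont : ContinuousOn g' (Metric.closedBall (0:E) k) :=
      (fun z _ => ((hgrad' z).differentiableAt.continuousAt).continuousWithinAt)
    obtain ⟨z, hzmem, hzmin⟩ := hcomp.exists_isMinOn
      ⟨0, Metric.mem_closedBall_self hkpos.le⟩ hcont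
    have hzle : ‖z‖ ≤ (k:ℝ) := by simpa [mem_closedBall_zero_iff] using hzmem
    have hznorm : ‖z‖ = (k:ℝ) := by
      by_contra hne
      have hlt : ‖z‖ < (k:ℝ) := lt_of_le_of_ne hzle hne
      have hloc : IsLocalMin g' z := by
        apply hzmin.isLocalMin
        exact Filter.mem_of_superset ((Metric.isOpen_ball).mem_nhds
          (by simpa [mem_ball_zero_iff] using hlt)) Metric.ball_subset_closedBall
      have h0 := hloc.hasFDerivAt_eq_zero (hasGradientAt_iff_hasFDerivAt.mp (hgrad' z))
      apply hG'ne z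
      have := congrArg (InnerProductSpace.toDual ℝ (EuclideanSpace ℝ (Fin n))).symm h0
      simpa using this
    refine ⟨z, hznorm, ?_⟩
    have hGz : G' z ≠ 0 := hG'ne z
    have hGznorm : (0:ℝ) < ‖G' z‖ := norm_pos_iff.mpr hGz
    set w : E := -((k : ℝ)/‖G' z‖) • G' z with hwdef
    have hwnorm : ‖w‖ = (k:ℝ) := by
      have h1 : ‖w‖ = ((k:ℝ) / ‖G' z‖) * ‖G' z‖ := by
        rw [hwdef, norm_smul, Real.norm_eq_abs, abs_neg,
          abs_of_nonneg (div_nonneg hkpos.le hGznorm.le)]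
      rw [h1, div_mul_cancel₀ _ hGznorm.ne']
    have hwmem : w ∈ Metric.closedBall (0:E) k := by
      simp [mem_closedBall_zero_iff, hwnorm]
    have hvi := varineq hgrad' (convex_closedBall _ _) hzmem (fun u hu => hzmin hu) hwmem
    have hip : ⟪G' z, w⟫ = -((k:ℝ) * ‖G' z‖) := by
      rw [hwdef, real_inner_smul_right, real_inner_self_eq_norm_sq]
      field_simp
    have ht1 := tangent_le hgrad' hc' z 0
    have ht2 := tangent_le hgrad' hc' 0 z
    rw [sub_zero] at ht2
    have hcs : -(‖G' 0‖ * ‖z‖) ≤ ⟪G' 0, z⟫ := by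
      have h1 := abs_real_inner_le_norm (G' 0) z
      have h2 := neg_abs_le ⟪G' 0, z⟫
      linarith
    rw [inner_sub_right, hip] at hvi
    have h01 : ⟪G' z, (0:E) - z⟫ = -⟪G' z, z⟫ := by
      rw [zero_sub, inner_neg_right]
    rw [h01] at ht1
    rw [hznorm] at hcs
    nlinarith
  have hM := hleg.eventually_ge_atTop (‖G' 0‖ + ‖v‖ + 1)
  obtain ⟨K, hK, hKs⟩ := Filter.mem_cocompact.mp hM
  obtain ⟨R, hR⟩ := hK.isBounded.subset_closedBall 0
  obtain ⟨k, hk⟩ := exists_nat_ge (max R 1)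
  obtain ⟨z, hznorm, hzbound⟩ := hkey (k + 1) (by omega)
  have hzK : z ∉ K := by
    intro hzK
    have h1 := hR hzK
    rw [mem_closedBall_zero_iff, hznorm] at h1
    have hRk : R ≤ (k:ℝ) := le_trans (le_max_left R 1) hk
    push_cast at h1
    linarith
  have hzk : ‖G' 0‖ + ‖v‖ + 1 ≤ ‖G z‖ := hKs hzK
  have hGle : ‖G z‖ ≤ ‖G' z‖ + ‖v‖ := by
    have h2 : G z = G' z + v := by simp [hG'def]
    rw [h2]
    exact norm_add_le _ _
  linarith

lemma inverse_package {g : E → ℝ} {G : E → E} (hg : ∀ z, HasGradientAt g (G z) z)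
    (hGcont : Continuous G)
    (hc : StrictConvexOn ℝ Set.univ g)
    (hleg : Tendsto (fun z => ‖G z‖) (cocompact (EuclideanSpace ℝ (Fin n))) atTop) :
    ∃ h : E → E, Continuous h ∧ (∀ v, G (h v) = v) ∧ (∀ z, h (G z) = z) ∧
      (∀ v, fenchel g v = ⟪v, h v⟫ - g (h v)) ∧
      (∀ v, HasGradientAt (fenchel g) (h v) v) := by
  have hinj : Function.Injective G := grad_injective hg hc
  have hsurj : Function.Surjective G := grad_surjective hg hc.convexOn hleg
  set e : E ≃ E := Equiv.ofBijective G ⟨hinj, hsurj⟩ with hedef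
  have heG : ∀ z, e z = G z := fun z => rfl
  set h : E → E := ⇑e.symm with hhdef
  have hGh : ∀ v, G (h v) = v := fun v => e.apply_symm_apply v
  have hhG : ∀ z, h (G z) = z := fun z => e.symm_apply_apply z
  -- proper map, hence closed, hence continuous inverse
  have hproper : IsProperMap G := by
    rw [isProperMap_iff_tendsto_cocompact]
    refine ⟨hGcont, ?_⟩
    have h1 := tendsto_norm_atTop_iff_cobounded.mp hleg
    rwa [Metric.cobounded_eq_cocompact] at h1
  have hclosed : IsClosedMap G := hproper.isClosedMap
  have hhcont : Continuous h := by
    rw [continuous_iff_isClosed]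
    intro C hC
    have : h ⁻¹' C = G '' C := by
      ext u
      constructor
      · intro hu
        exact ⟨h u, hu, hGh u⟩
      · rintro ⟨c, hcC, rfl⟩
        rwa [Set.mem_preimage, hhG]
    rw [this]
    exact hclosed C hC
  -- Fenchel formula
  have hbound : ∀ v z, ⟪v, z⟫ - g z ≤ ⟪v, h v⟫ - g (h v) := by
    intro v z
    have ht := tangent_le hg hc.convexOn (h v) z
    rw [hGh v, inner_sub_right] at ht
    linarith
  have hbdd : ∀ v, BddAbove (Set.range fun z => ⟪v, z⟫ - g z) := by
    intro v
    refine ⟨⟪v, h v⟫ - g (h v), ?_⟩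
    rintro _ ⟨z, rfl⟩
    exact hbound v z
  have hfen : ∀ v, fenchel g v = ⟪v, h v⟫ - g (h v) := by
    intro v
    apply le_antisymm
    · exact ciSup_le (hbound v)
    · exact le_ciSup (hbdd v) (h v)
  refine ⟨h, hhcont, hGh, hhG, hfen, ?_⟩
  intro v
  rw [hasGradientAt_iff_isLittleO, Asymptotics.isLittleO_iff]
  intro c hcpos
  have hcont : Tendsto (fun w => ‖h w - h v‖) (𝓝 v) (𝓝 0) := by
    have h1 : Tendsto h (𝓝 v) (𝓝 (h v)) := hhcont.continuousAt
    have h2 := h1.sub (tendsto_const_nhds (x := h v))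
    rw [sub_self] at h2
    simpa using h2.norm
  have hev := hcont.eventually (gt_mem_nhds hcpos)
  filter_upwards [hev] with w hw
  -- 0 ≤ fenchel w - fenchel v - ⟪h v, w - v⟫ ≤ ⟪w - v, h w - h v⟫
  have hlow : fenchel g v + ⟪w - v, h v⟫ ≤ fenchel g w := by
    have h1 : ⟪w, h v⟫ - g (h v) ≤ fenchel g w := le_ciSup (hbdd w) (h v)
    rw [hfen v, inner_sub_left]
    linarith
  have hhigh : fenchel g w ≤ fenchel g v + ⟪w - v, h w⟫ := by
    have h1 : ⟪v, h w⟫ - g (h w) ≤ fenchel g v := le_ciSup (hbdd v) (h w)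
    rw [hfen w, inner_sub_left]
    linarith
  have habs : |fenchel g w - fenchel g v - ⟪h v, w - v⟫| ≤ ‖w - v‖ * ‖h w - h v‖ := by
    rw [abs_le]
    constructor
    · rw [real_inner_comm]
      nlinarith [norm_nonneg (w - v), norm_nonneg (h w - h v)]
    · have h2 : ⟪w - v, h w⟫ - ⟪w - v, h v⟫ = ⟪w - v, h w - h v⟫ := by
        rw [inner_sub_right]
      have h3 := real_inner_le_norm (w - v) (h w - h v)
      rw [real_inner_comm]
      linarith [hhigh, hlow]
  calc ‖fenchel g w - fenchel g v - ⟪h v, w - v⟫‖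
      ≤ ‖w - v‖ * ‖h w - h v‖ := by rwa [Real.norm_eq_abs]
    _ ≤ ‖w - v‖ * c := by
        apply mul_le_mul_of_nonneg_left (le_of_lt hw) (norm_nonneg _)
    _ = c * ‖w - v‖ := by ring

end Aux

/-- strongly convex rate: if `f` is `μ`-strongly convex w.r.t. `φ`
(`μ > 0`), then along the mirror descent dynamics,
`D_φ(ȳ, y(t)) ≤ D_φ(ȳ, y₀) e^{−μt}` for all `t ≥ 0`. -/
theorem mirror_descent_strongly_convex_rate {n : ℕ} (f φ : EuclideanSpace ℝ (Fin n) → ℝ)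
    (hf : ContDiff ℝ 1 f) (hfconv : StrictConvexOn ℝ Set.univ f)
    (ybar : EuclideanSpace ℝ (Fin n)) (hmin : ∀ z, f ybar ≤ f z)
    (hφ : ContDiff ℝ 2 φ) (hφconv : StrictConvexOn ℝ Set.univ φ)
    (hleg : LegendreType φ)
    (μ : ℝ) (hμ : 0 < μ)
    (hstrong : ∀ y y' : EuclideanSpace ℝ (Fin n),
      f y + ⟪gradient f y, y' - y⟫ + μ * bregman φ y' y ≤ f y')
    (x₀ y₀ : EuclideanSpace ℝ (Fin n))
    (x y : ℝ → EuclideanSpace ℝ (Fin n)) (hx0 : x 0 = x₀)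
    (hode : ∀ t : ℝ, 0 ≤ t →
      HasDerivAt x (-gradient f (gradient (fenchel φ) (x t))) t)
    (hy : y = fun t => gradient (fenchel φ) (x t))
    (hy₀ : y₀ = gradient (fenchel φ) x₀) :
    ∀ t : ℝ, 0 ≤ t →
      bregman φ ybar (y t) ≤ bregman φ ybar y₀ * Real.exp (-(μ * t)) := by
  have hφdiff : Differentiable ℝ φ := hφ.differentiable (by norm_num)
  have hg : ∀ z, HasGradientAt φ (gradient φ z) z := fun z => (hφdiff z).hasGradientAt
  have hGcont : Continuous (fun z => gradient φ z) := by
    have h1 : Continuous (fderiv ℝ φ) := hφ.continuous_fderiv (by norm_num)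
    exact (InnerProductSpace.toDual ℝ
      (EuclideanSpace ℝ (Fin n))).symm.continuous.comp h1
  obtain ⟨h, hhcont, hGh, hhG, hfen, hfgrad⟩ := inverse_package hg hGcont hφconv hleg
  have hgradfen : ∀ v, gradient (fenchel φ) v = h v := fun v => (hfgrad v).gradient
  set V : ℝ → ℝ := fun s => φ ybar + fenchel φ (x s) - ⟪x s, ybar⟫ with hVdef
  have hbreg : ∀ v, bregman φ ybar (h v) = φ ybar + fenchel φ v - ⟪v, ybar⟫ := by
    intro v
    unfold bregman
    rw [hGh v, hfen v, inner_sub_right]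
    ring
  set D : ℝ → ℝ := fun s => ⟪gradient f (h (x s)), ybar - h (x s)⟫ with hDdef
  have hVd : ∀ s : ℝ, 0 ≤ s → HasDerivAt V (D s) s := by
    intro s hs
    have hx' := hode s hs
    rw [hgradfen (x s)] at hx'
    have hfe : HasDerivAt (fun u => fenchel φ (x u))
        ⟪h (x s), -gradient f (h (x s))⟫ s := by
      have h2 := (hasGradientAt_iff_hasFDerivAt.mp (hfgrad (x s))).comp_hasDerivAt s hx'
      simpa [InnerProductSpace.toDual_apply_apply, Function.comp_def] using h2
    have hin : HasDerivAt (fun u => ⟪x u, ybar⟫)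
        (⟪x s, (0 : EuclideanSpace ℝ (Fin n))⟫ + ⟪-gradient f (h (x s)), ybar⟫) s :=
      hx'.inner ℝ (hasDerivAt_const s ybar)
    have hcomb := (hfe.const_add (φ ybar)).sub hin
    have heq : ⟪h (x s), -gradient f (h (x s))⟫ -
        (⟪x s, (0 : EuclideanSpace ℝ (Fin n))⟫ + ⟪-gradient f (h (x s)), ybar⟫) = D s := by
      rw [hDdef]
      simp only [inner_zero_right, inner_neg_right, inner_neg_left, inner_sub_right]
      rw [real_inner_comm (h (x s)) (gradient f (h (x s)))]
      ring
    rw [heq] at hcomb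
    exact hcomb
  have hkeyineq : ∀ s : ℝ, D s + μ * V s ≤ 0 := by
    intro s
    have hst := hstrong (h (x s)) ybar
    have hm := hmin (h (x s))
    rw [hbreg (x s)] at hst
    simp only [hVdef, hDdef]
    linarith
  set W : ℝ → ℝ := fun s => V s * Real.exp (μ * s) with hWdef
  have hWd : ∀ s : ℝ, 0 ≤ s → HasDerivAt W ((D s + μ * V s) * Real.exp (μ * s)) s := by
    intro s hs
    have hexp : HasDerivAt (fun u : ℝ => Real.exp (μ * u)) (Real.exp (μ * s) * μ) s := by
      have h1 : HasDerivAt (fun u : ℝ => μ * u) μ s := by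
        simpa using (hasDerivAt_id s).const_mul μ
      simpa [Function.comp_def] using (Real.hasDerivAt_exp (μ * s)).comp s h1
    have h2 := (hVd s hs).mul hexp
    exact h2.congr_deriv (by ring)
  have hanti : AntitoneOn W (Set.Ici (0:ℝ)) := by
    apply antitoneOn_of_deriv_nonpos (convex_Ici 0)
    · intro s hs
      exact ((hWd s hs).continuousAt).continuousWithinAt
    · intro s hs
      rw [interior_Ici] at hs
      exact ((hWd s (le_of_lt hs)).differentiableAt).differentiableWithinAt
    · intro s hs
      rw [interior_Ici] at hs
      rw [(hWd s (le_of_lt hs)).deriv]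
      have hk := hkeyineq s
      nlinarith [Real.exp_pos (μ * s)]
  intro t ht
  have hW0 : W t ≤ W 0 := hanti Set.self_mem_Ici (Set.mem_Ici.mpr ht) ht
  have h1 : V t * Real.exp (μ * t) ≤ V 0 := by
    simpa [hWdef] using hW0
  have h2 := mul_le_mul_of_nonneg_right h1 (Real.exp_nonneg (-(μ * t)))
  rw [mul_assoc, ← Real.exp_add, add_neg_cancel, Real.exp_zero, mul_one] at h2
  have hVt : bregman φ ybar (y t) = V t := by
    rw [hy]
    simp only
    rw [hgradfen (x t)]
    exact hbreg (x t)
  have hV0 : bregman φ ybar y₀ = V 0 := by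
    rw [hy₀, hgradfen x₀, hbreg x₀, hVdef]
    simp [hx0]
  rw [hVt, hV0]
  exact h2
end

section
/- Let f : ℝⁿ → ℝ be C¹ and strictly convex with unique global minimizer ȳ, let φ : ℝⁿ → ℝ be C², strictly convex, Legendre type, with conjugate φ* whose Hessian ∇²φ*(x) is positive definite (hence invertible) for every x; set x̄ := ∇φ(ȳ), q(x, u) := f(∇φ*(x)) + f*(−u) + ⟨u, ȳ⟩, and for fixed ε > 0, T > 0 define V(x, t) := D_{φ*}(x, x̄) + ε n (T − t). Then for all x, u ∈ ℝⁿ and t ∈ [0, T], ∂_t V(x, t) + ⟨u, ∇_x V(x, t)⟩ + ε · tr( (∇²φ*(x))⁻¹ ∇²_x V(x, t) ) + q(x, u) = f(∇φ*(x)) + f*(−u) + ⟨u, ∇φ*(x)⟩ ≥ 0, with equality if and only if u = −∇f(∇φ*(x)); in particular V solves the Hamilton–Jacobi–Bellman equation ∂_t V + min_u { ⟨u, ∇_x V⟩ + ε tr((∇²φ*)⁻¹ ∇²_x V) + q(x, u) } = 0 with terminal condition V(x, T) = D_{φ*}(x, x̄). -/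
open scoped RealInnerProductSpace
open Filter MeasureTheory
open scoped Topology

/-- Hessian matrix of `g` at `z`: `(∇²g(z))_{ij} = ∂_i ∂_j g(z)`, realized as the
matrix of the derivative of the gradient. -/
noncomputable def hessMat {n : ℕ} (g : EuclideanSpace ℝ (Fin n) → ℝ)
    (z : EuclideanSpace ℝ (Fin n)) : Matrix (Fin n) (Fin n) ℝ :=
  Matrix.of fun i j => fderiv ℝ (gradient g) z (EuclideanSpace.single j 1) i

section Aux

open InnerProductSpace

variable {n : ℕ}

local notation "E" => EuclideanSpace ℝ (Fin n)

lemma line_convex {g : E → ℝ} (hconv : ConvexOn ℝ Set.univ g) (a b : E) :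
    ConvexOn ℝ Set.univ fun t : ℝ => g (a + t • (b - a)) := by
  have h := hconv.comp_affineMap (AffineMap.lineMap a b)
  rw [Set.preimage_univ] at h
  convert h using 1
  pick_goal -1
  · funext t
    simp only [Function.comp_apply, AffineMap.lineMap_apply_module]
    congr 1
    module
  all_goals rfl

lemma line_hasDerivAt {g : E → ℝ} {G x : E} (hg : HasGradientAt g G x) (a b : E) (t : ℝ)
    (hx : x = a + t • (b - a)) :
    HasDerivAt (fun s : ℝ => g (a + s • (b - a))) ⟪G, b - a⟫ t := by
  have hc : HasDerivAt (fun s : ℝ => a + s • (b - a)) (b - a) t := by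
    simpa using ((hasDerivAt_id t).smul_const (b - a)).const_add a
  subst hx
  have := (hg.hasFDerivAt.comp_hasDerivAt t hc)
  simpa [toDual_apply_apply, Function.comp_def] using this

lemma grad_ineq {g : E → ℝ} (hconv : ConvexOn ℝ Set.univ g) {a ga : E}
    (hga : HasGradientAt g ga a) (b : E) : g a + ⟪ga, b - a⟫ ≤ g b := by
  have hline := line_convex hconv a b
  have hd : HasDerivAt (fun s : ℝ => g (a + s • (b - a))) ⟪ga, b - a⟫ 0 :=
    line_hasDerivAt hga a b 0 (by simp)
  have h := hline.le_slope_of_hasDerivAt (Set.mem_univ (0:ℝ)) (Set.mem_univ 1) one_pos hd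
  have e1 : a + (1:ℝ) • (b - a) = b := by simp
  have e0 : a + (0:ℝ) • (b - a) = a := by simp
  rw [slope_def_field] at h
  rw [e1, e0, sub_zero, div_one] at h
  linarith

lemma exists_grad_zero {g : E → ℝ} (hconv : ConvexOn ℝ Set.univ g) {G : E → E}
    (hg : ∀ x, HasGradientAt g (G x) x)
    (hco : Tendsto (fun z : E => ‖G z‖) (cocompact _) atTop) : ∃ z, G z = 0 := by
  obtain ⟨K, hK, hKs⟩ := mem_cocompact.mp (hco.eventually (eventually_gt_atTop ‖G 0‖))
  obtain ⟨R, hR0, hKR⟩ := hK.isBounded.subset_ball_lt 0 0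
  have hgd : Differentiable ℝ g := fun x => (hg x).differentiableAt
  obtain ⟨z, hzmem, hzmin⟩ := (isCompact_closedBall (0:E) R).exists_isMinOn
    ⟨0, by simp [hR0.le]⟩ hgd.continuous.continuousOn
  by_cases hGz : G z = 0
  · exact ⟨z, hGz⟩
  exfalso
  have hzR : ‖z‖ ≤ R := by simpa [Metric.mem_closedBall] using hzmem
  rcases lt_or_eq_of_le hzR with hlt | heq
  · -- interior minimum
    have hloc : IsLocalMin g z := hzmin.isLocalMin
      (Metric.closedBall_mem_nhds_of_mem (by simpa [Metric.mem_ball] using hlt))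
    have h0 : fderiv ℝ g z = 0 := hloc.fderiv_eq_zero
    have h1 : (toDual ℝ E) (G z) = 0 := ((hg z).hasFDerivAt.fderiv.symm).trans h0
    exact hGz (by simpa using congrArg (toDual ℝ E).symm h1)
  · -- boundary minimum: first-order optimality
    have hfirst : ∀ w ∈ Metric.closedBall (0:E) R, 0 ≤ ⟪G z, w - z⟫ := by
      intro w hw
      have hslope : Tendsto (slope (fun s : ℝ => g (z + s • (w - z))) 0) (𝓝[≠] 0)
          (𝓝 ⟪G z, w - z⟫) :=
        hasDerivAt_iff_tendsto_slope.mp (line_hasDerivAt (hg z) z w 0 (by simp))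
      have hmono : Tendsto (slope (fun s : ℝ => g (z + s • (w - z))) 0) (𝓝[>] 0)
          (𝓝 ⟪G z, w - z⟫) :=
        hslope.mono_left (nhdsWithin_mono _ (fun t ht => ne_of_gt ht))
      refine ge_of_tendsto hmono ?_
      filter_upwards [Ioc_mem_nhdsGT_of_mem (Set.mem_Ico.mpr ⟨le_refl 0, one_pos⟩)] with t ht
      have hmem : z + t • (w - z) ∈ Metric.closedBall (0:E) R :=
        (convex_closedBall (0:E) R).add_smul_sub_mem hzmem hw ⟨ht.1.le, ht.2⟩
      have hge : g z ≤ g (z + t • (w - z)) := hzmin hmem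
      rw [slope_def_field]
      have e0 : z + (0:ℝ) • (w - z) = z := by simp
      rw [e0, sub_zero]
      exact div_nonneg (by linarith) ht.1.le
    set c := G z with hc
    have hcn : ‖c‖ ≠ 0 := by simpa using hGz
    set w : E := (-(R / ‖c‖)) • c with hwdef
    have hwball : w ∈ Metric.closedBall (0:E) R := by
      have hwn : ‖w‖ = R := by
        rw [hwdef, norm_smul, Real.norm_eq_abs, abs_neg,
          abs_of_nonneg (by positivity), div_mul_cancel₀ _ hcn]
      simp [Metric.mem_closedBall, hwn]
    have h1 := hfirst w hwball
    have hcw : ⟪c, w⟫ = -(R * ‖c‖) := by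
      rw [hwdef, real_inner_smul_right, real_inner_self_eq_norm_sq]
      field_simp
    -- monotonicity of the gradient between 0 and z
    have m1 := grad_ineq hconv (hg z) 0
    have m2 := grad_ineq hconv (hg 0) z
    have hinner1 : ⟪G z, (0:E) - z⟫ = -⟪c, z⟫ := by
      rw [zero_sub, inner_neg_right, hc]
    have hinner2 : ⟪G 0, z - 0⟫ = ⟪G 0, z⟫ := by rw [sub_zero]
    have hG0z : ⟪G 0, z⟫ ≤ ⟪c, z⟫ := by
      rw [hinner1] at m1; rw [hinner2] at m2; linarith
    have habs : -( ‖G 0‖ * R) ≤ ⟪G 0, z⟫ := by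
      have := abs_real_inner_le_norm (G 0) z
      rw [heq] at this
      have := neg_abs_le ⟪G 0, z⟫
      nlinarith [abs_real_inner_le_norm (G 0) z]
    have hcz : ⟪c, z⟫ ≤ ⟪c, w⟫ := by
      have := h1; rw [inner_sub_right] at this; linarith
    have hKz : z ∉ K := fun hzK => by
      have := hKR hzK
      rw [Metric.mem_ball, dist_zero_right, heq] at this
      exact lt_irrefl R this
    have hbig : ‖G 0‖ < ‖c‖ := hKs hKz
    rw [hcw] at hcz
    nlinarith [norm_nonneg c, norm_nonneg (G 0), hR0, hbig, hcz, hG0z, habs]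

lemma hgphi {φ : E → ℝ} (hφ : ContDiff ℝ 2 φ) : ∀ x : E, HasGradientAt φ (gradient φ x) x :=
  fun x => ((hφ.differentiable (by norm_num)) x).hasGradientAt

lemma inner_fun_eq (v : E) : (fun z : E => ⟪v, z⟫) = ⇑(toDual ℝ E v) := by
  funext z; simp [toDual_apply_apply]

lemma sub_linear_convex {φ : E → ℝ} (hφconv : StrictConvexOn ℝ Set.univ φ) (v : E) :
    ConvexOn ℝ Set.univ fun z : E => φ z - ⟪v, z⟫ := by
  refine ⟨convex_univ, ?_⟩
  intro x _ y _ a b ha hb hab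
  have h := hφconv.convexOn.2 (Set.mem_univ x) (Set.mem_univ y) ha hb hab
  simp only [smul_eq_mul]
  rw [inner_add_right, real_inner_smul_right, real_inner_smul_right]
  simp only [smul_eq_mul] at h
  linarith

lemma sub_linear_grad {φ : E → ℝ} (hφ : ContDiff ℝ 2 φ) (v : E) (x : E) :
    HasGradientAt (fun z : E => φ z - ⟪v, z⟫) (gradient φ x - v) x := by
  rw [hasGradientAt_iff_hasFDerivAt, map_sub]
  have h2 : HasFDerivAt (fun z : E => ⟪v, z⟫) (toDual ℝ E v) x := by
    rw [inner_fun_eq v]; exact (toDual ℝ E v).hasFDerivAt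
  have h1 := (hgphi hφ x).hasFDerivAt
  exact h1.sub h2

lemma grad_surj {φ : E → ℝ} (hφ : ContDiff ℝ 2 φ) (hφconv : StrictConvexOn ℝ Set.univ φ)
    (hleg : LegendreType φ) : Function.Surjective (gradient φ) := by
  intro v
  have hco : Tendsto (fun z : E => ‖gradient φ z - v‖) (cocompact E) atTop := by
    refine tendsto_atTop_mono (fun z => ?_) (tendsto_atTop_add_const_right _ (-‖v‖) hleg)
    have := norm_sub_norm_le (gradient φ z) v
    linarith
  obtain ⟨z, hz⟩ := exists_grad_zero (sub_linear_convex hφconv v)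
    (sub_linear_grad hφ v) hco
  exact ⟨z, by rwa [sub_eq_zero] at hz⟩

lemma grad_inj {φ : E → ℝ} (hφ : ContDiff ℝ 2 φ) (hφconv : StrictConvexOn ℝ Set.univ φ) :
    Function.Injective (gradient φ) := by
  intro a b hab
  by_contra hne
  set v := gradient φ a with hv
  set g : E → ℝ := fun z => φ z - ⟪v, z⟫ with hgdef
  have hga : HasGradientAt g 0 a := by
    have := sub_linear_grad hφ v a; rwa [← hv, sub_self] at this
  have hgb : HasGradientAt g 0 b := by
    have := sub_linear_grad hφ v b; rwa [← hab, sub_self] at this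
  have hconv := sub_linear_convex hφconv v

  have hmid : g ((1/2 : ℝ) • a + (1/2 : ℝ) • b) < (1/2 : ℝ) * g a + (1/2 : ℝ) * g b := by
    have h := hφconv.2 (Set.mem_univ a) (Set.mem_univ b) hne
      (by norm_num : (0:ℝ) < 1/2) (by norm_num : (0:ℝ) < 1/2) (by norm_num)
    simp only [smul_eq_mul] at h
    simp only [hgdef]
    rw [inner_add_right, real_inner_smul_right, real_inner_smul_right]
    linarith
  have hge : g a ≤ g ((1/2 : ℝ) • a + (1/2 : ℝ) • b) := by
    have h := grad_ineq hconv hga ((1/2 : ℝ) • a + (1/2 : ℝ) • b)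
    rw [inner_zero_left, add_zero] at h; exact h
  have hge2 : g b ≤ g ((1/2 : ℝ) • a + (1/2 : ℝ) • b) := by
    have h := grad_ineq hconv hgb ((1/2 : ℝ) • a + (1/2 : ℝ) • b)
    rw [inner_zero_left, add_zero] at h; exact h
  linarith

lemma grad_homeo {φ : E → ℝ} (hφ : ContDiff ℝ 2 φ) (hφconv : StrictConvexOn ℝ Set.univ φ)
    (hleg : LegendreType φ) : ∃ e : E ≃ₜ E, ⇑e = gradient φ := by
  rw [← isHomeomorph_iff_exists_homeomorph]
  have hcont : Continuous (gradient φ) := by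
    have h1 : Continuous (fderiv ℝ φ) := hφ.continuous_fderiv (by norm_num)
    exact ((toDual ℝ E).symm.continuous).comp h1
  have hproper : IsProperMap (gradient φ) := by
    rw [isProperMap_iff_tendsto_cocompact]
    refine ⟨hcont, ?_⟩
    have h2 : Tendsto (fun z : E => ‖gradient φ z‖) (cocompact E) atTop := hleg
    have h3 := tendsto_norm_atTop_iff_cobounded.mp h2
    rwa [Metric.cobounded_eq_cocompact] at h3
  rw [isHomeomorph_iff_continuous_isClosedMap_bijective]
  exact ⟨hcont, hproper.isClosedMap, grad_inj hφ hφconv, grad_surj hφ hφconv hleg⟩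

lemma fenchel_package {φ : E → ℝ} (hφ : ContDiff ℝ 2 φ) (hφconv : StrictConvexOn ℝ Set.univ φ)
    (hleg : LegendreType φ) :
    ∃ e : E ≃ₜ E, ⇑e = gradient φ ∧
      (∀ v : E, fenchel φ v = ⟪v, e.symm v⟫ - φ (e.symm v)) ∧
      (∀ v : E, HasGradientAt (fenchel φ) (e.symm v) v) := by
  obtain ⟨e, he⟩ := grad_homeo hφ hφconv hleg
  have hgrad_symm : ∀ v : E, gradient φ (e.symm v) = v := by
    intro v; rw [← he]; exact e.apply_symm_apply v
  have hbound : ∀ v z : E, ⟪v, z⟫ - φ z ≤ ⟪v, e.symm v⟫ - φ (e.symm v) := by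
    intro v z
    have h := grad_ineq hφconv.convexOn (hgphi hφ (e.symm v)) z
    rw [hgrad_symm v, inner_sub_right] at h
    linarith
  have hbdd : ∀ v : E, BddAbove (Set.range fun z : E => ⟪v, z⟫ - φ z) := by
    intro v
    exact ⟨⟪v, e.symm v⟫ - φ (e.symm v), by rintro y ⟨z, rfl⟩; exact hbound v z⟩
  have hval : ∀ v : E, fenchel φ v = ⟪v, e.symm v⟫ - φ (e.symm v) := by
    intro v
    refine le_antisymm (ciSup_le fun z => hbound v z) ?_
    exact le_ciSup (hbdd v) (e.symm v)
  refine ⟨e, he, hval, ?_⟩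
  intro v₀
  set z₀ := e.symm v₀ with hz₀
  rw [hasGradientAt_iff_isLittleO]
  have hres : ∀ v : E, 0 ≤ fenchel φ v - fenchel φ v₀ - ⟪z₀, v - v₀⟫ := by
    intro v
    have h1 : ⟪v, z₀⟫ - φ z₀ ≤ fenchel φ v := le_ciSup (hbdd v) z₀
    rw [hval v₀]
    have : ⟪z₀, v - v₀⟫ = ⟪v, z₀⟫ - ⟪v₀, z₀⟫ := by
      rw [inner_sub_right, real_inner_comm z₀ v, real_inner_comm z₀ v₀]
    rw [this]
    linarith
  have hres2 : ∀ v : E, fenchel φ v - fenchel φ v₀ - ⟪z₀, v - v₀⟫ ≤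
      ‖v - v₀‖ * ‖e.symm v - z₀‖ := by
    intro v
    have h1 : ⟪v₀, e.symm v⟫ - φ (e.symm v) ≤ fenchel φ v₀ := le_ciSup (hbdd v₀) (e.symm v)
    have h2 : fenchel φ v = ⟪v, e.symm v⟫ - φ (e.symm v) := hval v
    have h3 : fenchel φ v - fenchel φ v₀ ≤ ⟪v - v₀, e.symm v⟫ := by
      rw [inner_sub_left]; linarith
    have h4 : ⟪z₀, v - v₀⟫ = ⟪v - v₀, z₀⟫ := by rw [real_inner_comm]
    have h5 : ⟪v - v₀, e.symm v⟫ - ⟪v - v₀, z₀⟫ = ⟪v - v₀, e.symm v - z₀⟫ := by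
      rw [inner_sub_right]
    have h6 : ⟪v - v₀, e.symm v - z₀⟫ ≤ ‖v - v₀‖ * ‖e.symm v - z₀‖ :=
      real_inner_le_norm _ _
    linarith
  rw [Asymptotics.isLittleO_iff]
  intro c hc
  have htend : Tendsto (fun v : E => ‖e.symm v - z₀‖) (𝓝 v₀) (𝓝 0) := by
    have h1 : Tendsto (fun v : E => e.symm v - z₀) (𝓝 v₀) (𝓝 (e.symm v₀ - z₀)) :=
      (e.symm.continuous.tendsto v₀).sub tendsto_const_nhds
    rw [hz₀] at h1 ⊢
    simpa using h1.norm
  filter_upwards [htend (Iio_mem_nhds hc)] with v hv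
  have hv' : ‖e.symm v - z₀‖ < c := hv
  have h0 := hres v
  have h1 := hres2 v
  rw [Real.norm_eq_abs, abs_of_nonneg h0]
  calc fenchel φ v - fenchel φ v₀ - ⟪z₀, v - v₀⟫ ≤ ‖v - v₀‖ * ‖e.symm v - z₀‖ := h1
    _ ≤ ‖v - v₀‖ * c := mul_le_mul_of_nonneg_left (le_of_lt hv') (norm_nonneg _)
    _ = c * ‖v - v₀‖ := by ring

lemma fstar_lower {f : E → ℝ}
    (hfstar : ∀ v : E, BddAbove (Set.range fun z => ⟪v, z⟫ - f z)) (u y : E) :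
    ⟪u, y⟫ - f y ≤ fenchel f u :=
  le_ciSup (hfstar u) y

lemma fstar_at_grad {f : E → ℝ} (hf : ContDiff ℝ 1 f) (hfconv : ConvexOn ℝ Set.univ f)
    (hfstar : ∀ v : E, BddAbove (Set.range fun z => ⟪v, z⟫ - f z)) (y : E) :
    fenchel f (gradient f y) = ⟪gradient f y, y⟫ - f y := by
  refine le_antisymm (ciSup_le fun z => ?_) (le_ciSup (hfstar _) y)
  have h := grad_ineq hfconv ((hf.differentiable one_ne_zero y).hasGradientAt) z
  rw [inner_sub_right] at h
  linarith

lemma max_imp_grad {f : E → ℝ} (hf : ContDiff ℝ 1 f) {u y : E}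
    (hmax : ∀ z, ⟪u, z⟫ - f z ≤ ⟪u, y⟫ - f y) : u = gradient f y := by
  have h2 : HasFDerivAt (fun z : E => ⟪u, z⟫) (toDual ℝ E u) y := by
    rw [inner_fun_eq u]; exact (toDual ℝ E u).hasFDerivAt
  have hk : HasFDerivAt (fun z : E => ⟪u, z⟫ - f z)
      (toDual ℝ E u - toDual ℝ E (gradient f y)) y :=
    h2.sub (hf.differentiable one_ne_zero y).hasGradientAt.hasFDerivAt
  have hlmax : IsLocalMax (fun z : E => ⟪u, z⟫ - f z) y := Filter.Eventually.of_forall hmax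
  have hzero : fderiv ℝ (fun z : E => ⟪u, z⟫ - f z) y = 0 := hlmax.fderiv_eq_zero
  have h3 := hk.fderiv
  rw [hzero] at h3
  have h4 : toDual ℝ E u = toDual ℝ E (gradient f y) := by
    have := sub_eq_zero.mp h3.symm
    exact this
  exact (toDual ℝ E).injective h4

end Aux

/-- `V(x,t) = D_{φ*}(x, x̄) + εn(T−t)` satisfies, for all `x`, `u` and
`t ∈ [0,T]`,
`∂ₜV + ⟨u, ∇ₓV⟩ + ε tr((∇²φ*)⁻¹ ∇²ₓV) + q(x,u) = f(∇φ*(x)) + f*(−u) + ⟨u, ∇φ*(x)⟩ ≥ 0`,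
with equality iff `u = −∇f(∇φ*(x))`; in particular `V` solves the HJB equation with
terminal condition `V(·,T) = D_{φ*}(·, x̄)`.  `hfstar` records finiteness of `f*`. -/
theorem HJB_verification {n : ℕ} (f φ : EuclideanSpace ℝ (Fin n) → ℝ)
    (hf : ContDiff ℝ 1 f) (hfconv : StrictConvexOn ℝ Set.univ f)
    (ybar : EuclideanSpace ℝ (Fin n)) (hmin : ∀ z, f ybar ≤ f z)
    (hfstar : ∀ v : EuclideanSpace ℝ (Fin n),
      BddAbove (Set.range fun z => ⟪v, z⟫ - f z))
    (hφ : ContDiff ℝ 2 φ) (hφconv : StrictConvexOn ℝ Set.univ φ)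
    (hleg : LegendreType φ)
    (hPD : ∀ z : EuclideanSpace ℝ (Fin n), (hessMat (fenchel φ) z).PosDef)
    (xbar : EuclideanSpace ℝ (Fin n)) (hxbar : xbar = gradient φ ybar)
    (q : EuclideanSpace ℝ (Fin n) → EuclideanSpace ℝ (Fin n) → ℝ)
    (hq : q = fun x u => f (gradient (fenchel φ) x) + fenchel f (-u) + ⟪u, ybar⟫)
    (ε T : ℝ) (hε : 0 < ε) (hT : 0 < T)
    (V : EuclideanSpace ℝ (Fin n) → ℝ → ℝ)
    (hV : V = fun z t => bregman (fenchel φ) z xbar + ε * n * (T - t)) :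
    (∀ (x u : EuclideanSpace ℝ (Fin n)) (t : ℝ), t ∈ Set.Icc (0:ℝ) T →
      (deriv (fun s => V x s) t + ⟪u, gradient (fun z => V z t) x⟫
          + ε * Matrix.trace ((hessMat (fenchel φ) x)⁻¹ * hessMat (fun z => V z t) x)
          + q x u
        = f (gradient (fenchel φ) x) + fenchel f (-u) + ⟪u, gradient (fenchel φ) x⟫) ∧
      (0 ≤ f (gradient (fenchel φ) x) + fenchel f (-u) + ⟪u, gradient (fenchel φ) x⟫) ∧
      (deriv (fun s => V x s) t + ⟪u, gradient (fun z => V z t) x⟫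
          + ε * Matrix.trace ((hessMat (fenchel φ) x)⁻¹ * hessMat (fun z => V z t) x)
          + q x u = 0
        ↔ u = -gradient f (gradient (fenchel φ) x))) ∧
    (∀ (x : EuclideanSpace ℝ (Fin n)) (t : ℝ), t ∈ Set.Icc (0:ℝ) T →
      deriv (fun s => V x s) t
        + ⨅ u : EuclideanSpace ℝ (Fin n),
            (⟪u, gradient (fun z => V z t) x⟫
              + ε * Matrix.trace ((hessMat (fenchel φ) x)⁻¹ * hessMat (fun z => V z t) x)
              + q x u)
        = 0) ∧
    (∀ x : EuclideanSpace ℝ (Fin n), V x T = bregman (fenchel φ) x xbar) := by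
  subst hxbar
  obtain ⟨e, he, hval, hG⟩ := fenchel_package hφ hφconv hleg
  have hGeq : gradient (fenchel φ) = ⇑e.symm := gradient_eq hG
  have hGxbar : gradient (fenchel φ) (gradient φ ybar) = ybar := by
    rw [hGeq]
    have h1 : gradient φ ybar = e ybar := (congrFun he ybar).symm
    rw [h1, Homeomorph.symm_apply_apply]
  -- time derivative
  have hDer : ∀ (x : EuclideanSpace ℝ (Fin n)) (t : ℝ),
      deriv (fun s : ℝ => bregman (fenchel φ) x (gradient φ ybar) + ε * ↑n * (T - s)) t
        = -(ε * ↑n) := by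
    intro x t
    have h1 : HasDerivAt (fun s : ℝ => T - s) (-1) t := by
      simpa using (hasDerivAt_id t).const_sub T
    have h2 := (h1.const_mul (ε * (n:ℝ))).const_add
      (bregman (fenchel φ) x (gradient φ ybar))
    rw [h2.deriv]; ring
  -- gradient of the space slice
  have hGradSlice : ∀ (c : ℝ) (x : EuclideanSpace ℝ (Fin n)),
      HasGradientAt (fun z => bregman (fenchel φ) z (gradient φ ybar) + c)
        (e.symm x - ybar) x := by
    intro c x
    have hb : (fun z => bregman (fenchel φ) z (gradient φ ybar) + c)
        = fun z => (fenchel φ z - fenchel φ (gradient φ ybar)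
            - ⟪ybar, z - gradient φ ybar⟫) + c := by
      funext z; rw [bregman, hGxbar]
    rw [hb, hasGradientAt_iff_hasFDerivAt, map_sub]
    have hinner : HasFDerivAt
        (fun z : EuclideanSpace ℝ (Fin n) => ⟪ybar, z - gradient φ ybar⟫)
        (InnerProductSpace.toDual ℝ (EuclideanSpace ℝ (Fin n)) ybar) x := by
      have hfun : (fun z : EuclideanSpace ℝ (Fin n) => ⟪ybar, z - gradient φ ybar⟫)
          = fun z => ⟪ybar, z⟫ - ⟪ybar, gradient φ ybar⟫ := by
        funext z; rw [inner_sub_right]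
      rw [hfun]
      have base : HasFDerivAt (fun z : EuclideanSpace ℝ (Fin n) => ⟪ybar, z⟫)
          (InnerProductSpace.toDual ℝ (EuclideanSpace ℝ (Fin n)) ybar) x := by
        rw [inner_fun_eq ybar]
        exact (InnerProductSpace.toDual ℝ (EuclideanSpace ℝ (Fin n)) ybar).hasFDerivAt
      exact base.sub_const _
    exact (((hG x).hasFDerivAt.sub_const _).sub hinner).add_const c
  have hGradSliceEq : ∀ c : ℝ,
      gradient (fun z => bregman (fenchel φ) z (gradient φ ybar) + c)
        = fun x => e.symm x - ybar :=
    fun c => gradient_eq (fun x => hGradSlice c x)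
  have hHess : ∀ (c : ℝ) (x : EuclideanSpace ℝ (Fin n)),
      hessMat (fun z => bregman (fenchel φ) z (gradient φ ybar) + c) x
        = hessMat (fenchel φ) x := by
    intro c x
    rw [hessMat, hessMat]
    have h1 : gradient (fun z => bregman (fenchel φ) z (gradient φ ybar) + c)
        = fun z => gradient (fenchel φ) z - ybar := by
      rw [hGradSliceEq c, hGeq]
    rw [h1, fderiv_sub_const]
  have hTr : ∀ x : EuclideanSpace ℝ (Fin n),
      Matrix.trace ((hessMat (fenchel φ) x)⁻¹ * hessMat (fenchel φ) x) = (n:ℝ) := by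
    intro x
    rw [Matrix.nonsing_inv_mul _ (hPD x).det_pos.ne'.isUnit, Matrix.trace_one,
      Fintype.card_fin]
  -- the key identity
  have key : ∀ (x u : EuclideanSpace ℝ (Fin n)) (t : ℝ),
      deriv (fun s => V x s) t + ⟪u, gradient (fun z => V z t) x⟫
          + ε * Matrix.trace ((hessMat (fenchel φ) x)⁻¹ * hessMat (fun z => V z t) x)
          + q x u
        = f (gradient (fenchel φ) x) + fenchel f (-u) + ⟪u, gradient (fenchel φ) x⟫ := by
    intro x u t
    simp only [hV, hq, hGeq]
    rw [hDer x t, (hGradSlice (ε * ↑n * (T - t)) x).gradient,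
      hHess (ε * ↑n * (T - t)) x, hTr x, inner_sub_right]
    ring
  have nonneg : ∀ (x u : EuclideanSpace ℝ (Fin n)),
      0 ≤ f (gradient (fenchel φ) x) + fenchel f (-u) + ⟪u, gradient (fenchel φ) x⟫ := by
    intro x u
    have h := fstar_lower hfstar (-u) (gradient (fenchel φ) x)
    rw [inner_neg_left] at h
    linarith
  have hzero : ∀ x : EuclideanSpace ℝ (Fin n),
      f (gradient (fenchel φ) x)
        + fenchel f (-(-gradient f (gradient (fenchel φ) x)))
        + ⟪-gradient f (gradient (fenchel φ) x), gradient (fenchel φ) x⟫ = 0 := by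
    intro x
    rw [neg_neg, fstar_at_grad hf hfconv.convexOn hfstar, inner_neg_left]
    ring
  have himp : ∀ (x u : EuclideanSpace ℝ (Fin n)),
      f (gradient (fenchel φ) x) + fenchel f (-u) + ⟪u, gradient (fenchel φ) x⟫ = 0 →
        u = -gradient f (gradient (fenchel φ) x) := by
    intro x u h0
    have hle : ∀ z, ⟪-u, z⟫ - f z ≤ ⟪-u, gradient (fenchel φ) x⟫ - f (gradient (fenchel φ) x) := by
      intro z
      have h1 : ⟪-u, z⟫ - f z ≤ fenchel f (-u) := fstar_lower hfstar (-u) z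
      have h2 : fenchel f (-u) = ⟪-u, gradient (fenchel φ) x⟫ - f (gradient (fenchel φ) x) := by
        rw [inner_neg_left]; linarith
      linarith
    have h3 := max_imp_grad hf hle
    rw [← h3, neg_neg]
  refine ⟨?_, ?_, ?_⟩
  · intro x u t ht
    refine ⟨key x u t, nonneg x u, ?_⟩
    rw [key x u t]
    constructor
    · exact himp x u
    · intro hu; rw [hu]; exact hzero x
  · intro x t ht
    have hd : deriv (fun s => V x s) t = -(ε * ↑n) := by
      simp only [hV]; exact hDer x t
    have hbody : ∀ u : EuclideanSpace ℝ (Fin n),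
        (⟪u, gradient (fun z => V z t) x⟫
          + ε * Matrix.trace ((hessMat (fenchel φ) x)⁻¹ * hessMat (fun z => V z t) x)
          + q x u)
        = (f (gradient (fenchel φ) x) + fenchel f (-u) + ⟪u, gradient (fenchel φ) x⟫)
            + ε * ↑n := by
      intro u
      have h := key x u t
      linarith [h, hd]
    have hbdd : BddBelow (Set.range fun u : EuclideanSpace ℝ (Fin n) =>
        (⟪u, gradient (fun z => V z t) x⟫
          + ε * Matrix.trace ((hessMat (fenchel φ) x)⁻¹ * hessMat (fun z => V z t) x)
          + q x u)) := by
      refine ⟨ε * ↑n, ?_⟩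
      rintro r ⟨u, rfl⟩
      simp only [hbody u]
      have := nonneg x u
      linarith
    have hinf : (⨅ u : EuclideanSpace ℝ (Fin n),
        (⟪u, gradient (fun z => V z t) x⟫
          + ε * Matrix.trace ((hessMat (fenchel φ) x)⁻¹ * hessMat (fun z => V z t) x)
          + q x u)) = ε * ↑n := by
      apply le_antisymm
      · have h1 := ciInf_le hbdd (-gradient f (gradient (fenchel φ) x))
        simp only [hbody (-gradient f (gradient (fenchel φ) x))] at h1
        linarith [h1, hzero x]
      · apply le_ciInf
        intro u
        simp only [hbody u]
        have := nonneg x u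
        linarith
    rw [hd, hinf]
    ring
  · intro x
    simp only [hV, sub_self, mul_zero, add_zero]
end

section
/- (Brezis–Ekeland attainment.) Let f : ℝⁿ → ℝ be C¹ and convex with Legendre–Fenchel conjugate f*, fix T > 0 and x₀ ∈ ℝⁿ, and let x : [0, T] → ℝⁿ be a solution of the gradient flow ẋ(t) = −∇f(x(t)) with x(0) = x₀. Then the Brezis–Ekeland action attains its minimum value: S(x(·)) := ∫₀ᵀ { f(x(t)) + f*(−ẋ(t)) } dt + (1/2)|x(T)|² = (1/2)|x₀|². -/
open scoped RealInnerProductSpace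
open Filter MeasureTheory

-- gradient inequality for convex C¹ functions
lemma grad_ineq_s16 {n : ℕ} {f : EuclideanSpace ℝ (Fin n) → ℝ}
    (hf : ContDiff ℝ 1 f) (hfconv : ConvexOn ℝ Set.univ f)
    (y z : EuclideanSpace ℝ (Fin n)) :
    ⟪gradient f y, z - y⟫ ≤ f z - f y := by
  rcases eq_or_ne z y with rfl | hzy
  · simp
  set v := gradient f y with hv
  have hdiff : DifferentiableAt ℝ f y := (hf.differentiable one_ne_zero) y
  have hgrad : HasGradientAt f v y := hdiff.hasGradientAt
  have hF : HasFDerivAt f (InnerProductSpace.toDual ℝ _ v) y :=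
    hasGradientAt_iff_hasFDerivAt.mp hgrad
  -- the line s ↦ y + s • (z - y)
  set L : ℝ → EuclideanSpace ℝ (Fin n) := fun s => y + s • (z - y) with hL
  have hline : ∀ s : ℝ, HasDerivAt L (z - y) s := by
    intro s
    have h := ((hasDerivAt_id s).smul_const (z - y)).const_add y; simp only [one_smul] at h; exact h
  have hg : HasDerivAt (f ∘ L) (⟪v, z - y⟫) 0 := by
    have hF' : HasFDerivAt f (InnerProductSpace.toDual ℝ _ v) (L 0) := by
      simpa [hL] using hF
    have := hF'.comp_hasDerivAt (x := (0:ℝ)) (hline 0)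
    simpa [hL, InnerProductSpace.toDual_apply_apply] using this
  have hconvg : ConvexOn ℝ Set.univ (f ∘ L) := by
    have := hfconv.comp_affineMap (AffineMap.lineMap y z)
    have hEq : (f ∘ L) = f ∘ (AffineMap.lineMap y z) := by
      funext s
      simp [hL, AffineMap.lineMap_apply, Function.comp]
      congr 1
      module
    rw [hEq]
    simpa using this
  have hs := hconvg.le_slope_of_hasDerivAt (x := (0:ℝ)) (y := (1:ℝ))
    (Set.mem_univ _) (Set.mem_univ _) one_pos hg
  have hL0 : L 0 = y := by simp [hL]
  have hL1 : L 1 = z := by simp [hL]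
  simpa [slope, hL0, hL1, Function.comp] using hs

lemma fenchel_grad {n : ℕ} {f : EuclideanSpace ℝ (Fin n) → ℝ}
    (hf : ContDiff ℝ 1 f) (hfconv : ConvexOn ℝ Set.univ f)
    (y : EuclideanSpace ℝ (Fin n)) :
    fenchel f (gradient f y) = ⟪gradient f y, y⟫ - f y := by
  set v := gradient f y with hv
  have hub : ∀ z, ⟪v, z⟫ - f z ≤ ⟪v, y⟫ - f y := by
    intro z
    have := grad_ineq_s16 hf hfconv y z
    rw [inner_sub_right] at this
    linarith
  have hbdd : BddAbove (Set.range fun z : EuclideanSpace ℝ (Fin n) => ⟪v, z⟫ - f z) :=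
    ⟨⟪v, y⟫ - f y, by rintro _ ⟨z, rfl⟩; exact hub z⟩
  refine le_antisymm (ciSup_le hub) ?_
  exact le_ciSup hbdd y

/-- Brezis–Ekeland attainment: for C¹ convex `f` and `x` a solution
of the gradient flow `ẋ = −∇f(x)` on `[0,T]` with `x(0) = x₀` (so `−ẋ(t) = ∇f(x(t))`),
the Brezis–Ekeland action attains its minimum:
`∫₀ᵀ {f(x(t)) + f*(−ẋ(t))} dt + ½|x(T)|² = ½|x₀|²`. -/
theorem brezis_ekeland_attainment {n : ℕ} (f : EuclideanSpace ℝ (Fin n) → ℝ)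
    (hf : ContDiff ℝ 1 f) (hfconv : ConvexOn ℝ Set.univ f)
    (T : ℝ) (hT : 0 < T)
    (x₀ : EuclideanSpace ℝ (Fin n))
    (x : ℝ → EuclideanSpace ℝ (Fin n))
    (hx0 : x 0 = x₀)
    (hode : ∀ t ∈ Set.Icc (0:ℝ) T,
      HasDerivWithinAt x (-gradient f (x t)) (Set.Icc (0:ℝ) T) t) :
    (∫ t in (0:ℝ)..T, (f (x t) + fenchel f (gradient f (x t)))) + (1/2) * ‖x T‖^2
      = (1/2) * ‖x₀‖^2 := by
  have hxcont : ContinuousOn x (Set.Icc 0 T) := fun t ht =>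
    (hode t ht).continuousWithinAt
  -- integrand = ⟪∇f(x t), x t⟫
  have hint_eq : ∀ t, f (x t) + fenchel f (gradient f (x t)) = ⟪gradient f (x t), x t⟫ := by
    intro t
    rw [fenchel_grad hf hfconv]
    ring
  -- continuity of gradient
  have hgradcont : Continuous (fun z => gradient f z) := by
    have h1 : Continuous (fderiv ℝ f) := hf.continuous_fderiv one_ne_zero
    have : Continuous ((InnerProductSpace.toDual ℝ (EuclideanSpace ℝ (Fin n))).symm) :=
      (InnerProductSpace.toDual ℝ _).symm.continuous
    exact this.comp h1
  have hIcont : ContinuousOn (fun t => ⟪gradient f (x t), x t⟫) (Set.Icc 0 T) :=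
    ContinuousOn.inner ((hgradcont.comp_continuousOn hxcont)) hxcont
  have hIint : IntervalIntegrable (fun t => ⟪gradient f (x t), x t⟫) volume 0 T := by
    apply ContinuousOn.intervalIntegrable
    rwa [Set.uIcc_of_le hT.le]
  -- FTC for G t = -(1/2) ‖x t‖²
  have hftc : (∫ t in (0:ℝ)..T, ⟪gradient f (x t), x t⟫)
      = (-(1/2) * ‖x T‖^2) - (-(1/2) * ‖x 0‖^2) := by
    apply intervalIntegral.integral_eq_sub_of_hasDeriv_right_of_le hT.le
    · exact (continuousOn_const.mul ((hxcont.norm).pow 2))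
    · intro t ht
      have htIcc : t ∈ Set.Icc (0:ℝ) T := Set.mem_Icc.mpr ⟨ht.1.le, ht.2.le⟩
      have hd : HasDerivWithinAt x (-gradient f (x t)) (Set.Ioi t) t := by
        refine (hode t htIcc).mono_of_mem_nhdsWithin ?_
        exact Icc_mem_nhdsGT_of_mem (Set.mem_Ico.mpr ⟨ht.1.le, ht.2⟩)
      have hinner : HasDerivWithinAt (fun s => ⟪x s, x s⟫)
          (⟪x t, -gradient f (x t)⟫ + ⟪-gradient f (x t), x t⟫) (Set.Ioi t) t :=
        hd.inner ℝ hd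
      have : HasDerivWithinAt (fun s => -(1/2 : ℝ) * ⟪x s, x s⟫)
          (-(1/2 : ℝ) * (⟪x t, -gradient f (x t)⟫ + ⟪-gradient f (x t), x t⟫))
          (Set.Ioi t) t := hinner.const_mul _
      have heq : (fun s => -(1/2 : ℝ) * ⟪x s, x s⟫) = fun s => -(1/2 : ℝ) * ‖x s‖^2 := by
        funext s; rw [real_inner_self_eq_norm_sq]
      rw [heq] at this
      refine this.congr_deriv ?_
      rw [inner_neg_left, inner_neg_right, real_inner_comm]
      ring
    · exact hIint
  calc (∫ t in (0:ℝ)..T, (f (x t) + fenchel f (gradient f (x t)))) + (1/2) * ‖x T‖^2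
      = (∫ t in (0:ℝ)..T, ⟪gradient f (x t), x t⟫) + (1/2) * ‖x T‖^2 := by
        congr 1
        exact intervalIntegral.integral_congr (fun t _ => hint_eq t)
    _ = (1/2) * ‖x₀‖^2 := by rw [hftc, hx0]; ring
end

section
/- Let f : ℝⁿ → ℝ be C¹ and strictly convex with unique global minimizer ȳ and with L_f-Lipschitz gradient, and let φ : ℝⁿ → ℝ be C², α-strongly convex (α > 0), Legendre type, with conjugate φ*. Let x : [0, ∞) → ℝⁿ solve ẋ(t) = −∇f(∇φ*(x(t))) with output y(t) := ∇φ*(x(t)). Then for all t ≥ 0, |∇f(y(t))| ≤ 2 L_f √( (2/α) D_φ(ȳ, y(0)) ) + |∇f(y(0))|. -/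
open scoped RealInnerProductSpace
open Filter MeasureTheory

section Aux

variable {n : ℕ}

local notation "E" => EuclideanSpace ℝ (Fin n)

/-- Gradient inequality for differentiable convex functions. -/
lemma aux_convex_grad_le {f : E → ℝ} (hf : ContDiff ℝ 1 f)
    (hc : ConvexOn ℝ Set.univ f) (a b : E) :
    ⟪gradient f a, b - a⟫ ≤ f b - f a := by
  set L : ℝ →ᵃ[ℝ] E := AffineMap.lineMap a b with hLdef
  have hL0 : L 0 = a := by simp [hLdef]
  have hL1 : L 1 = b := by simp [hLdef]
  have hLd : HasDerivAt (fun s : ℝ => L s) (b - a) 0 := by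
    have h1 : HasDerivAt (fun s : ℝ => s • (b - a) + a) ((1:ℝ) • (b - a)) 0 :=
      ((hasDerivAt_id (0:ℝ)).smul_const (b - a)).add_const a
    simp only [one_smul] at h1
    have h2 : (fun s : ℝ => L s) = fun s : ℝ => s • (b - a) + a := by
      funext s; simp [hLdef, AffineMap.lineMap_apply]
    rw [h2]; exact h1
  have hF : HasFDerivAt f (InnerProductSpace.toDual ℝ E (gradient f a)) a :=
    ((hf.differentiable one_ne_zero) a).hasGradientAt.hasFDerivAt
  have hF' : HasFDerivAt f (InnerProductSpace.toDual ℝ E (gradient f a)) (L 0) := hL0 ▸ hF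
  have hg : HasDerivAt (f ∘ L) ⟪gradient f a, b - a⟫ 0 := by
    have := hF'.comp_hasDerivAt 0 hLd
    simpa [InnerProductSpace.toDual_apply_apply] using this
  have hcg : ConvexOn ℝ Set.univ (f ∘ L) := by
    have := hc.comp_affineMap L
    simpa using this
  have hslope := hcg.deriv_le_slope (Set.mem_univ 0) (Set.mem_univ 1)
    (by norm_num) hg.differentiableAt
  rw [hg.deriv] at hslope
  calc ⟪gradient f a, b - a⟫ ≤ slope (f ∘ L) 0 1 := hslope
    _ = f b - f a := by simp [slope, hL0, hL1]

/-- Surjectivity of the gradient of a strongly convex function. -/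
lemma aux_surj {φ : E → ℝ} (hφ : ContDiff ℝ 2 φ) {α : ℝ} (hα : 0 < α)
    (hstrong : ∀ y y' : E, φ y + ⟪gradient φ y, y' - y⟫ + (α / 2) * ‖y' - y‖^2 ≤ φ y')
    (v : E) : ∃ z, gradient φ z = v := by
  classical
  set h : E → ℝ := fun z => φ z - ⟪v, z⟫ with hhdef
  have hφd : Differentiable ℝ φ := hφ.differentiable (by norm_num)
  have hcont : Continuous h := (hφd.continuous).sub (continuous_const.inner continuous_id)
  set c : ℝ := ‖gradient φ 0 - v‖ with hc
  have hlb : ∀ z : E, φ 0 - c * ‖z‖ + (α/2) * ‖z‖^2 ≤ h z := by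
    intro z
    have h1 := hstrong 0 z
    simp only [sub_zero] at h1
    have h2 : -(c * ‖z‖) ≤ ⟪gradient φ 0 - v, z⟫ := by
      have := abs_real_inner_le_norm (gradient φ 0 - v) z
      have := neg_abs_le ⟪gradient φ 0 - v, z⟫
      nlinarith [abs_real_inner_le_norm (gradient φ 0 - v) z,
        neg_abs_le ⟪gradient φ 0 - v, z⟫]
    have h3 : ⟪gradient φ 0 - v, z⟫ = ⟪gradient φ 0, z⟫ - ⟪v, z⟫ := inner_sub_left _ _ _
    simp only [hhdef]
    nlinarith [h1, h2, h3]
  have htop : Tendsto h (cocompact E) atTop := by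
    have hq : Tendsto (fun r : ℝ => φ 0 - c * r + (α/2) * r^2) atTop atTop := by
      refine tendsto_atTop_mono' atTop ?_
        (tendsto_atTop_add_const_right _ (φ 0) tendsto_id)
      filter_upwards [eventually_ge_atTop ((2*(c+1))/α), eventually_ge_atTop (0:ℝ)]
        with r hr hr0
      have : 1 ≤ α/2 * r - c := by
        rw [div_le_iff₀ hα] at hr
        nlinarith
      simp only [id]
      nlinarith
    have hnorm : Tendsto (fun z : E => ‖z‖) (cocompact E) atTop :=
      tendsto_norm_cocompact_atTop
    exact tendsto_atTop_mono hlb (hq.comp hnorm)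
  obtain ⟨z0, hz0⟩ := hcont.exists_forall_le htop
  refine ⟨z0, ?_⟩
  have hmin : IsLocalMin h z0 := by
    apply IsMinOn.isLocalMin _ (Filter.univ_mem)
    intro z _
    exact hz0 z
  have hFh : HasFDerivAt h
      (InnerProductSpace.toDual ℝ E (gradient φ z0) - innerSL ℝ v) z0 := by
    have h1 : HasFDerivAt φ (InnerProductSpace.toDual ℝ E (gradient φ z0)) z0 :=
      (hφd z0).hasGradientAt.hasFDerivAt
    have h2 : HasFDerivAt (fun z : E => ⟪v, z⟫) (innerSL ℝ v) z0 :=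
      (innerSL ℝ v).hasFDerivAt
    exact h1.sub h2
  have hzero := hmin.hasFDerivAt_eq_zero hFh
  have heq : InnerProductSpace.toDual ℝ E (gradient φ z0) = innerSL ℝ v :=
    sub_eq_zero.mp hzero
  have : InnerProductSpace.toDual ℝ E (gradient φ z0) = InnerProductSpace.toDual ℝ E v := by
    rw [heq]; rfl
  exact (InnerProductSpace.toDual ℝ E).injective this


/-- Under strong convexity, if `∇φ z = v` then `z` maximizes `⟪v,·⟫ - φ`. -/
lemma aux_maximizer {φ : E → ℝ} {α : ℝ}
    (hstrong : ∀ y y' : E, φ y + ⟪gradient φ y, y' - y⟫ + (α / 2) * ‖y' - y‖^2 ≤ φ y')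
    (hα : 0 < α) {v z : E} (hz : gradient φ z = v) (z' : E) :
    ⟪v, z'⟫ - φ z' ≤ ⟪v, z⟫ - φ z := by
  have h1 := hstrong z z'
  rw [hz] at h1
  have h2 : ⟪v, z' - z⟫ = ⟪v, z'⟫ - ⟪v, z⟫ := inner_sub_right _ _ _
  nlinarith [sq_nonneg ‖z' - z‖, mul_nonneg (le_of_lt (half_pos hα)) (sq_nonneg ‖z' - z‖)]

lemma aux_bdd {φ : E → ℝ} {α : ℝ}
    (hstrong : ∀ y y' : E, φ y + ⟪gradient φ y, y' - y⟫ + (α / 2) * ‖y' - y‖^2 ≤ φ y')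
    (hα : 0 < α) {v z : E} (hz : gradient φ z = v) :
    BddAbove (Set.range fun z' : E => ⟪v, z'⟫ - φ z') := by
  exact ⟨⟪v, z⟫ - φ z, by rintro _ ⟨z', rfl⟩; exact aux_maximizer hstrong hα hz z'⟩

/-- Fenchel equality at the gradient point. -/
lemma aux_fenchel_eq {φ : E → ℝ} {α : ℝ}
    (hstrong : ∀ y y' : E, φ y + ⟪gradient φ y, y' - y⟫ + (α / 2) * ‖y' - y‖^2 ≤ φ y')
    (hα : 0 < α) {v z : E} (hz : gradient φ z = v) :
    fenchel φ v = ⟪v, z⟫ - φ z := by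
  refine le_antisymm (ciSup_le fun z' => aux_maximizer hstrong hα hz z') ?_
  exact le_ciSup (aux_bdd hstrong hα hz) z

/-- The conjugate of a strongly convex function is differentiable with
gradient the inverse of `∇φ`. -/
lemma aux_hasGradient_fenchel {φ : E → ℝ} (hφ : ContDiff ℝ 2 φ) {α : ℝ} (hα : 0 < α)
    (hstrong : ∀ y y' : E, φ y + ⟪gradient φ y, y' - y⟫ + (α / 2) * ‖y' - y‖^2 ≤ φ y')
    {v z : E} (hz : gradient φ z = v) :
    HasGradientAt (fenchel φ) z v := by
  have surj := aux_surj hφ hα hstrong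
  -- key two-sided bound
  have key : ∀ w : E, 0 ≤ fenchel φ w - fenchel φ v - ⟪z, w - v⟫ ∧
      fenchel φ w - fenchel φ v - ⟪z, w - v⟫ ≤ (1/α) * ‖w - v‖^2 := by
    intro w
    obtain ⟨zw, hzw⟩ := surj w
    have hfv : fenchel φ v = ⟪v, z⟫ - φ z := aux_fenchel_eq hstrong hα hz
    have hfw : fenchel φ w = ⟪w, zw⟫ - φ zw := aux_fenchel_eq hstrong hα hzw
    have hlow : ⟪w, z⟫ - φ z ≤ fenchel φ w :=
      le_ciSup (aux_bdd hstrong hα hzw) z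
    constructor
    · have : ⟪z, w - v⟫ = ⟪w, z⟫ - ⟪v, z⟫ := by
        rw [inner_sub_right, real_inner_comm z w, real_inner_comm z v]
      rw [hfv, this]; linarith
    · -- distance bound: α‖zw - z‖² ≤ ⟪w - v, zw - z⟫
      have h1 := hstrong z zw
      have h2 := hstrong zw z
      rw [hz] at h1; rw [hzw] at h2
      have hd : α * ‖zw - z‖^2 ≤ ⟪w - v, zw - z⟫ := by
        have e1 : ⟪w, z - zw⟫ = -⟪w, zw - z⟫ := by
          rw [← inner_neg_right]; congr 1; abel
        have e2 : ‖z - zw‖ = ‖zw - z‖ := norm_sub_rev _ _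
        have e2' : ‖z - zw‖^2 = ‖zw - z‖^2 := by rw [e2]
        have e3 : ⟪w - v, zw - z⟫ = ⟪w, zw - z⟫ - ⟪v, zw - z⟫ := inner_sub_left _ _ _
        rw [e1, e2'] at h2
        linarith [h1, h2]
      have hdn : ‖zw - z‖ ≤ ‖w - v‖ / α := by
        rcases eq_or_lt_of_le (norm_nonneg (zw - z)) with h0 | h0
        · rw [← h0]; positivity
        · have := hd.trans (real_inner_le_norm (w - v) (zw - z))
          rw [le_div_iff₀ hα]
          nlinarith
      have hub : ⟪w - v, zw - z⟫ ≤ ‖w - v‖ * ‖zw - z‖ := real_inner_le_norm _ _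
      have hexp : fenchel φ w - fenchel φ v - ⟪z, w - v⟫ ≤ ⟪w - v, zw - z⟫ - (α/2) * ‖zw - z‖^2 := by
        rw [hfv, hfw]
        have e1 : ⟪v, zw - z⟫ = ⟪v, zw⟫ - ⟪v, z⟫ := inner_sub_right _ _ _
        have e2 : ⟪z, w - v⟫ = ⟪w, z⟫ - ⟪v, z⟫ := by
          rw [inner_sub_right, real_inner_comm z w, real_inner_comm z v]
        have e3 : ⟪w - v, zw - z⟫ = ⟪w, zw⟫ - ⟪w, z⟫ - ⟪v, zw⟫ + ⟪v, z⟫ := by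
          rw [inner_sub_left, inner_sub_right, inner_sub_right]; ring
        nlinarith [h1]
      have : ⟪w - v, zw - z⟫ - (α/2) * ‖zw - z‖^2 ≤ (1/α) * ‖w - v‖^2 := by
        have h3 : ‖w - v‖ * ‖zw - z‖ ≤ ‖w - v‖ * (‖w - v‖ / α) :=
          mul_le_mul_of_nonneg_left hdn (norm_nonneg _)
        have : ‖w - v‖ * (‖w - v‖ / α) = (1/α) * ‖w - v‖^2 := by field_simp
        nlinarith [sq_nonneg ‖zw - z‖]
      linarith
  -- conclude HasGradientAt via little-o
  rw [hasGradientAt_iff_hasFDerivAt, hasFDerivAt_iff_isLittleO_nhds_zero]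
  rw [Asymptotics.isLittleO_iff]
  intro c hc
  filter_upwards [Metric.ball_mem_nhds (0 : E) (mul_pos hc hα)] with h hh
  have hnorm : ‖h‖ < c * α := by simpa [dist_eq_norm] using hh
  obtain ⟨hk1, hk2⟩ := key (v + h)
  have hsimp : (v + h) - v = h := by abel
  rw [hsimp] at hk1 hk2
  have htd : (InnerProductSpace.toDual ℝ E z) h = ⟪z, h⟫ := rfl
  have habs : |fenchel φ (v + h) - fenchel φ v - ⟪z, h⟫| ≤ (1/α) * ‖h‖^2 := by
    rw [abs_le]; constructor <;> linarith [hk1, hk2]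
  have hfin : (1/α) * ‖h‖^2 ≤ c * ‖h‖ := by
    rw [sq]
    rw [div_mul_eq_mul_div, mul_comm]
    rw [div_le_iff₀ hα]
    nlinarith [norm_nonneg h]
  calc ‖fenchel φ (v + h) - fenchel φ v - (InnerProductSpace.toDual ℝ E z) h‖
      = |fenchel φ (v + h) - fenchel φ v - ⟪z, h⟫| := by rw [htd]; rfl
    _ ≤ (1/α) * ‖h‖^2 := habs
    _ ≤ c * ‖h‖ := hfin


/-- if `∇f` is `L_f`-Lipschitz and `φ` is `α`-strongly convex, then along
the mirror-descent closed loop,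
`|∇f(y(t))| ≤ 2 L_f √((2/α) D_φ(ȳ, y(0))) + |∇f(y(0))|` for all `t ≥ 0`. -/
theorem gradient_norm_bound_along_flow {n : ℕ} (f φ : EuclideanSpace ℝ (Fin n) → ℝ)
    (hf : ContDiff ℝ 1 f) (hfconv : StrictConvexOn ℝ Set.univ f)
    (ybar : EuclideanSpace ℝ (Fin n)) (hmin : ∀ z, f ybar ≤ f z)
    (Lf : NNReal) (hLip : LipschitzWith Lf (gradient f))
    (hφ : ContDiff ℝ 2 φ)
    (α : ℝ) (hα : 0 < α)
    (hstrong : ∀ y y' : EuclideanSpace ℝ (Fin n),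
      φ y + ⟪gradient φ y, y' - y⟫ + (α / 2) * ‖y' - y‖^2 ≤ φ y')
    (hφconv : StrictConvexOn ℝ Set.univ φ)
    (hleg : LegendreType φ)
    (x y : ℝ → EuclideanSpace ℝ (Fin n))
    (hode : ∀ t : ℝ, 0 ≤ t →
      HasDerivAt x (-gradient f (gradient (fenchel φ) (x t))) t)
    (hy : y = fun t => gradient (fenchel φ) (x t)) :
    ∀ t : ℝ, 0 ≤ t →
      ‖gradient f (y t)‖
        ≤ 2 * (Lf : ℝ) * Real.sqrt ((2 / α) * bregman φ ybar (y 0))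
          + ‖gradient f (y 0)‖ := by
  intro t ht
  classical
  have surj := aux_surj hφ hα hstrong
  have hYgrad : ∀ v : EuclideanSpace ℝ (Fin n),
      gradient φ (gradient (fenchel φ) v) = v := by
    intro v
    obtain ⟨z, hz⟩ := surj v
    rw [(aux_hasGradient_fenchel hφ hα hstrong hz).gradient]
    exact hz
  have hyx : ∀ s : ℝ, gradient φ (y s) = x s := by
    intro s; rw [hy]; exact hYgrad (x s)
  have hfen : ∀ s : ℝ, fenchel φ (x s) = ⟪x s, y s⟫ - φ (y s) := fun s =>
    aux_fenchel_eq hstrong hα (hyx s)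
  set D : ℝ → ℝ := fun s => φ ybar + fenchel φ (x s) - ⟪ybar, x s⟫ with hD
  have hDbreg : ∀ s : ℝ, D s = bregman φ ybar (y s) := by
    intro s
    simp only [hD, bregman, hfen s, hyx s, inner_sub_right]
    rw [real_inner_comm (x s) ybar]
    ring
  have hDderiv : ∀ s : ℝ, 0 ≤ s →
      HasDerivAt D (⟪gradient f (y s), ybar - y s⟫) s := by
    intro s hs
    have hx' := hode s hs
    have hys : gradient (fenchel φ) (x s) = y s := by rw [hy]
    rw [hys] at hx'
    have hgf : HasGradientAt (fenchel φ) (y s) (x s) :=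
      aux_hasGradient_fenchel hφ hα hstrong (hyx s)
    have h1 : HasDerivAt (fun u => fenchel φ (x u)) ⟪y s, -gradient f (y s)⟫ s := by
      have := (hgf.hasFDerivAt).comp_hasDerivAt s hx'
      simp only [InnerProductSpace.toDual_apply_apply] at this
      exact this
    have h2 : HasDerivAt (fun u => ⟪ybar, x u⟫) ⟪ybar, -gradient f (y s)⟫ s := by
      have := ((innerSL ℝ ybar).hasFDerivAt).comp_hasDerivAt s hx'
      exact this
    have h3 := ((hasDerivAt_const s (φ ybar)).add h1).sub h2
    convert h3 using 1
    · rfl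
    · rfl
    · rfl
    simp only [inner_neg_right, inner_sub_right]
    rw [real_inner_comm (gradient f (y s)) ybar, real_inner_comm (gradient f (y s)) (y s)]
    ring
  have hanti : AntitoneOn D (Set.Ici (0:ℝ)) := by
    apply antitoneOn_of_deriv_nonpos (convex_Ici 0)
    · intro s hs
      exact (hDderiv s hs).continuousAt.continuousWithinAt
    · intro s hs
      rw [interior_Ici] at hs
      exact (hDderiv s hs.le).differentiableAt.differentiableWithinAt
    · intro s hs
      rw [interior_Ici] at hs
      rw [(hDderiv s hs.le).deriv]
      have h4 := aux_convex_grad_le hf hfconv.convexOn (y s) ybar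
      have h5 := hmin (y s)
      linarith
  have hDle : D t ≤ D 0 := hanti (Set.mem_Ici.mpr le_rfl) (Set.mem_Ici.mpr ht) ht
  have hbb : bregman φ ybar (y t) ≤ bregman φ ybar (y 0) := by
    rw [← hDbreg t, ← hDbreg 0]; exact hDle
  have hBt : (α/2) * ‖ybar - y t‖^2 ≤ bregman φ ybar (y t) := by
    have := hstrong (y t) ybar
    simp only [bregman]
    linarith
  have hxb : ‖y t - ybar‖^2 ≤ (2/α) * bregman φ ybar (y 0) := by
    have h6 : (α/2) * ‖y t - ybar‖^2 ≤ bregman φ ybar (y 0) := by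
      rw [norm_sub_rev]; linarith
    have h7 := mul_le_mul_of_nonneg_left h6 (by positivity : (0:ℝ) ≤ 2/α)
    have h8 : (2/α) * ((α/2) * ‖y t - ybar‖^2) = ‖y t - ybar‖^2 := by
      field_simp
    linarith [h7, h8.symm.le]
  have hsq : ‖y t - ybar‖ ≤ Real.sqrt ((2/α) * bregman φ ybar (y 0)) := by
    have := Real.sqrt_le_sqrt hxb
    rwa [Real.sqrt_sq (norm_nonneg _)] at this
  have hgrad0 : gradient f ybar = 0 := by
    have hmin' : IsLocalMin f ybar :=
      IsMinOn.isLocalMin (fun z _ => hmin z) Filter.univ_mem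
    have hF : HasFDerivAt f
        (InnerProductSpace.toDual ℝ (EuclideanSpace ℝ (Fin n)) (gradient f ybar)) ybar :=
      ((hf.differentiable one_ne_zero) ybar).hasGradientAt.hasFDerivAt
    have h9 := hmin'.hasFDerivAt_eq_zero hF
    have h10 : InnerProductSpace.toDual ℝ (EuclideanSpace ℝ (Fin n)) (gradient f ybar)
        = InnerProductSpace.toDual ℝ (EuclideanSpace ℝ (Fin n)) 0 := by
      rw [h9]; simp
    exact (InnerProductSpace.toDual ℝ (EuclideanSpace ℝ (Fin n))).injective h10
  have hLipb : ‖gradient f (y t)‖ ≤ (Lf : ℝ) * ‖y t - ybar‖ := by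
    have := hLip.dist_le_mul (y t) ybar
    simpa [hgrad0, dist_eq_norm] using this
  have hLf : (0:ℝ) ≤ (Lf : ℝ) := Lf.coe_nonneg
  have hS := Real.sqrt_nonneg ((2/α) * bregman φ ybar (y 0))
  have hN := norm_nonneg (gradient f (y 0))
  nlinarith [mul_le_mul_of_nonneg_left hsq hLf, mul_nonneg hLf hS]

end Aux
end
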